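/- Let e : C → C be additive and 𝔽_q-homogeneous (e(ζ+ζ') = e(ζ)+e(ζ') and e(λζ) = λe(ζ) for all λ ∈ 𝔽_q), and let x ∈ C satisfy e(a·x) = 0 for every a ∈ A. Then for every a ∈ A one has Σ_{i≥0} e(a(θ)·x/θ^{i+1}) t^i = ā(t) · Σ_{i≥0} e(x/θ^{i+1}) t^i as formal power series in C[[t]], where ā(t) ∈ 𝔽_q[t] ⊂ C[[t]] denotes the polynomial a with the variable θ replaced by t. -/

import Mathlib

/-- Let `E : C → C` be additive and `𝔽_q`-homogeneous (with `𝔽_q` identified with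
`{λ : C | λ^q = λ}`), and let `x ∈ C` satisfy `E(a·x) = 0` for every `a ∈ A = 𝔽_q[θ]`.
Then for every such `a`, `∑_i E(a(θ)x/θ^{i+1}) t^i = ā(t) · ∑_i E(x/θ^{i+1}) t^i` in
`C[[t]]`, where `ā(t)` is the polynomial `a` with `θ` replaced by `t`. -/
theorem anderson_generating_function_A_linearity
    {C : Type*} [NormedField C] [CompleteSpace C] [IsAlgClosed C] [IsUltrametricDist C]
    (p e : ℕ) (hp : p.Prime) (he : 0 < e) [CharP C p]
    (q : ℕ) (hq : q = p ^ e)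
    (θ : C) (hθ : ‖θ‖ = (q : ℝ))
    (E : C → C)
    (hadd : ∀ x y : C, E (x + y) = E x + E y)
    (hhom : ∀ lam x : C, lam ^ q = lam → E (lam * x) = lam * E x)
    (x : C)
    (hx : ∀ a : Polynomial C, (∀ n : ℕ, a.coeff n ^ q = a.coeff n) →
      E (a.eval θ * x) = 0) :
    ∀ a : Polynomial C, (∀ n : ℕ, a.coeff n ^ q = a.coeff n) →
      (PowerSeries.mk fun i => E (a.eval θ * x / θ ^ (i + 1)))
        = (a : PowerSeries C) * PowerSeries.mk fun i => E (x / θ ^ (i + 1)) := by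
  intro a ha
  have hq0 : q ≠ 0 := by subst hq; exact pow_ne_zero e hp.pos.ne'
  have hq1 : (1 : ℝ) ≤ (q : ℝ) := by
    exact_mod_cast Nat.one_le_iff_ne_zero.mpr hq0
  have hθ0 : θ ≠ 0 := by
    intro h
    rw [h, norm_zero] at hθ
    linarith
  -- E of monomial multiples of x vanishes
  have hEθ : ∀ k : ℕ, E (θ ^ k * x) = 0 := by
    intro k
    have := hx (Polynomial.X ^ k) (by
      intro n
      rw [Polynomial.coeff_X_pow]
      split
      · exact one_pow q
      · exact zero_pow hq0)
    simpa using this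
  -- E as an additive monoid hom
  let Eh : C →+ C := AddMonoidHom.mk' E hadd
  ext n
  rw [PowerSeries.coeff_mul, PowerSeries.coeff_mk]
  simp only [Polynomial.coeff_coe, PowerSeries.coeff_mk]
  rw [Finset.Nat.sum_antidiagonal_eq_sum_range_succ_mk]
  set M := max (n + 1) (a.natDegree + 1) with hM
  have hdeg : a.natDegree < M := lt_of_lt_of_le (Nat.lt_succ_self _) (le_max_right _ _)
  have hnM : n + 1 ≤ M := le_max_left _ _
  have heval : a.eval θ * x / θ ^ (n + 1)
      = ∑ j ∈ Finset.range M, a.coeff j * (θ ^ j * x / θ ^ (n + 1)) := by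
    rw [Polynomial.eval_eq_sum_range' hdeg, Finset.sum_mul, Finset.sum_div]
    exact Finset.sum_congr rfl fun j _ => by ring
  rw [heval]
  have hmap : E (∑ j ∈ Finset.range M, a.coeff j * (θ ^ j * x / θ ^ (n + 1)))
      = ∑ j ∈ Finset.range M, E (a.coeff j * (θ ^ j * x / θ ^ (n + 1))) :=
    map_sum Eh _ _
  rw [hmap]
  have hterm : ∀ j ∈ Finset.range M, E (a.coeff j * (θ ^ j * x / θ ^ (n + 1)))
      = a.coeff j * E (θ ^ j * x / θ ^ (n + 1)) := fun j _ => hhom _ _ (ha j)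
  rw [Finset.sum_congr rfl hterm]
  -- drop the tail terms (j > n)
  rw [← Finset.sum_subset (Finset.range_subset_range.mpr hnM) (fun j _ hj => by
    simp only [Finset.mem_range, not_lt] at hj
    have : θ ^ j * x / θ ^ (n + 1) = θ ^ (j - (n + 1)) * x := by
      rw [← pow_sub_mul_pow θ hj]
      field_simp
    rw [this, hEθ, mul_zero])]
  refine Finset.sum_congr rfl fun k hk => ?_
  simp only [Finset.mem_range] at hk
  congr 2
  have h1 : θ ^ (n + 1) = θ ^ k * θ ^ (n - k + 1) := by
    rw [← pow_add]
    congr 1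
    omega
  rw [h1, mul_div_mul_left _ _ (pow_ne_zero k hθ0)]
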